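/- Let Ω : [γ_1, γ_2] → ℝ^N be real analytic on an open interval containing [γ_1, γ_2]. Suppose that for every c ∈ ℝ^N \ {0} the function γ ↦ Ω(γ)·c is not identically zero on [γ_1, γ_2] (non-degeneracy). Then there exist m_0 ∈ ℕ and ρ_0 > 0 such that for every γ ∈ [γ_1, γ_2] and every ℓ ∈ ℤ^N \ {0}: max_{0 ≤ n ≤ m_0} |∂_γ^n (Ω(γ)·ℓ)| ≥ ρ_0 ⟨ℓ⟩, where ⟨ℓ⟩ = max{1,|ℓ|}. -/

import Mathlib

open Set Filter Topology

private lemma iterDeriv_analytic {f : ℝ → ℝ} {U : Set ℝ}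
    (hf : AnalyticOnNhd ℝ f U) (n : ℕ) : AnalyticOnNhd ℝ (iteratedDeriv n f) U := by
  induction n with
  | zero => simpa [iteratedDeriv_zero] using hf
  | succ n ih => rw [iteratedDeriv_succ]; exact ih.deriv

private lemma iterDerivWithin_isOpen' {f : ℝ → ℝ} {U : Set ℝ} (hU : IsOpen U)
    {γ : ℝ} (hγ : γ ∈ U) (n : ℕ) :
    iteratedDerivWithin n f U γ = iteratedDeriv n f γ := by
  rw [iteratedDerivWithin_eq_iteratedFDerivWithin, iteratedDeriv_eq_iteratedFDeriv,
    iteratedFDerivWithin_of_isOpen n hU hγ]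

private lemma eventually_zero_of_iterDeriv_zero {f : ℝ → ℝ} {x : ℝ}
    (hf : AnalyticAt ℝ f x) (h : ∀ n, iteratedDeriv n f x = 0) :
    f =ᶠ[𝓝 x] 0 := by
  obtain ⟨p, r, hpr⟩ := hf
  have key : ∀ y ∈ Metric.eball (0 : ℝ) r, f (x + y) = 0 := by
    intro y hy
    have hsum := hpr.hasSum_iteratedFDeriv hy
    have h0 : HasSum (fun _ : ℕ => (0 : ℝ)) (f (x + y)) := by
      have hz : ∀ n : ℕ, ((n.factorial : ℝ)⁻¹ • (iteratedFDeriv ℝ n f x) fun _ => y) = 0 := by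
        intro n
        rw [iteratedFDeriv_apply_eq_iteratedDeriv_mul_prod, h n]
        simp
      simp only [hz] at hsum
      exact hsum
    simpa using h0.unique hasSum_zero
  have hmem : {z : ℝ | z - x ∈ Metric.eball (0 : ℝ) r} ∈ 𝓝 x := by
    have hc : ContinuousAt (fun z : ℝ => z - x) x := by fun_prop
    have h0 : Metric.eball (0 : ℝ) r ∈ 𝓝 ((fun z : ℝ => z - x) x) := by
      simpa using EMetric.ball_mem_nhds (0 : ℝ) hpr.r_pos
    exact hc.preimage_mem_nhds h0
  filter_upwards [hmem] with z hz
  simpa using key (z - x) hz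

private lemma iterDeriv_sum_mul {N : ℕ} {Ω : ℝ → Fin N → ℝ} {U : Set ℝ} (hU : IsOpen U)
    (hΩ : ∀ a, AnalyticOnNhd ℝ (fun γ => Ω γ a) U) (c : Fin N → ℝ) (n : ℕ) {γ : ℝ}
    (hγ : γ ∈ U) :
    iteratedDeriv n (fun γ => ∑ a, Ω γ a * c a) γ
      = ∑ a, c a * iteratedDeriv n (fun γ => Ω γ a) γ := by
  have hud : UniqueDiffOn ℝ U := hU.uniqueDiffOn
  have hCD : ∀ a : Fin N, ContDiffOn ℝ n (fun γ => Ω γ a * c a) U := fun a =>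
    ((hΩ a).mul analyticOnNhd_const).contDiffOn hud
  rw [← iterDerivWithin_isOpen' hU hγ]
  have h2 := iteratedFDerivWithin_fun_sum_apply (𝕜 := ℝ)
    (f := fun (a : Fin N) (γ : ℝ) => Ω γ a * c a) (u := Finset.univ) (i := n) (x := γ)
    hud hγ (fun a _ => hCD a γ hγ)
  have h3 := congrFun (congrArg DFunLike.coe h2) (fun _ : Fin n => (1:ℝ))
  have h1 : iteratedDerivWithin n (fun γ => ∑ a, Ω γ a * c a) U γ
      = ∑ a, iteratedDerivWithin n (fun γ => Ω γ a * c a) U γ := by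
    simpa [iteratedDerivWithin_eq_iteratedFDerivWithin,
      ContinuousMultilinearMap.sum_apply] using h3
  rw [h1]
  refine Finset.sum_congr rfl fun a _ => ?_
  have hca : (fun γ => Ω γ a * c a) = fun γ => c a * Ω γ a := by
    funext z; ring
  rw [hca, iteratedDerivWithin_const_mul hγ hud (c a) ((hΩ a).contDiffOn hud γ hγ),
    iterDerivWithin_isOpen' hU hγ]


/-- Transversality from non-degeneracy: if `Ω : ℝ → ℝᴺ` is analytic on an open set containing
`[γ₁, γ₂]` and non-degenerate (for every `c ≠ 0` the map `γ ↦ Ω(γ)·c` is not identically zero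
on `[γ₁, γ₂]`), then there are `m₀ ∈ ℕ` and `ρ₀ > 0` such that for all `γ ∈ [γ₁, γ₂]` and all
`ℓ ∈ ℤᴺ \ {0}`, `max_{0 ≤ n ≤ m₀} |∂_γⁿ (Ω(γ)·ℓ)| ≥ ρ₀ ⟨ℓ⟩`. -/
theorem transversality_of_nondegenerate (N : ℕ) (γ₁ γ₂ : ℝ)
    (Ω : ℝ → Fin N → ℝ) (U : Set ℝ)
    (hU : IsOpen U) (hUIcc : Set.Icc γ₁ γ₂ ⊆ U)
    (hΩ : ∀ a, AnalyticOnNhd ℝ (fun γ => Ω γ a) U)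
    (hnd : ∀ c : Fin N → ℝ, c ≠ 0 → ∃ γ ∈ Set.Icc γ₁ γ₂, (∑ a, Ω γ a * c a) ≠ 0) :
    ∃ m₀ : ℕ, ∃ ρ₀ : ℝ, 0 < ρ₀ ∧
      ∀ γ ∈ Set.Icc γ₁ γ₂, ∀ ℓ : Fin N → ℤ, ℓ ≠ 0 →
        ∃ n ≤ m₀, ρ₀ * max 1 (∑ a, (|ℓ a| : ℝ))
          ≤ |iteratedDeriv n (fun γ => ∑ a, Ω γ a * (ℓ a : ℝ)) γ| := by
  classical
  set D : ℕ → Fin N → ℝ → ℝ := fun n a γ => iteratedDeriv n (fun γ => Ω γ a) γ with hD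
  set G : ℕ → ((Fin N → ℝ) × ℝ) → ℝ := fun n p => ∑ a, p.1 a * D n a p.2 with hG
  set H : ℕ → ((Fin N → ℝ) × ℝ) → ℝ :=
    fun m p => ∑ n ∈ Finset.range (m + 1), |G n p| with hH
  have hDanalytic : ∀ n a, AnalyticOnNhd ℝ (D n a) U := fun n a => iterDeriv_analytic (hΩ a) n
  have hGcont : ∀ n, ContinuousOn (G n) (Set.univ ×ˢ U) := by
    intro n
    apply continuousOn_finset_sum
    intro a _
    exact (((continuous_apply a).comp continuous_fst).continuousOn).mul
      (((hDanalytic n a).continuousOn).comp continuous_snd.continuousOn fun p hp => hp.2)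
  have hHcont : ∀ m, ContinuousOn (H m) (Set.univ ×ˢ U) := fun m =>
    continuousOn_finset_sum _ fun n _ => (hGcont n).abs
  -- pointwise nonvanishing of some derivative
  have hpt : ∀ c : Fin N → ℝ, c ≠ 0 → ∀ γ ∈ Set.Icc γ₁ γ₂, ∃ n, G n (c, γ) ≠ 0 := by
    intro c hc γ hγ
    by_contra hcon
    push_neg at hcon
    have hγU : γ ∈ U := hUIcc hγ
    have hfc : AnalyticOnNhd ℝ (fun γ => ∑ a, Ω γ a * c a) U :=
      Finset.analyticOnNhd_fun_sum Finset.univ fun a _ => (hΩ a).mul analyticOnNhd_const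
    have hall : ∀ n, iteratedDeriv n (fun γ => ∑ a, Ω γ a * c a) γ = 0 := by
      intro n
      rw [iterDeriv_sum_mul hU hΩ c n hγU]
      simpa [hG, hD] using hcon n
    have hev := eventually_zero_of_iterDeriv_zero (hfc γ hγU) hall
    have hIV : Set.Icc γ₁ γ₂ ⊆ connectedComponentIn U γ :=
      isPreconnected_Icc.subset_connectedComponentIn hγ hUIcc
    have hEq : Set.EqOn (fun γ => ∑ a, Ω γ a * c a) 0 (connectedComponentIn U γ) :=
      (hfc.mono (connectedComponentIn_subset U γ)).eqOn_zero_of_preconnected_of_eventuallyEq_zero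
        isPreconnected_connectedComponentIn (mem_connectedComponentIn hγU) hev
    obtain ⟨γ', hγ', hne⟩ := hnd c hc
    exact hne (hEq (hIV hγ'))
  -- the ℓ¹ sphere is compact
  set K : Set (Fin N → ℝ) := {c | ∑ a, |c a| = 1} with hK
  have hKc : IsCompact K := by
    rw [Metric.isCompact_iff_isClosed_bounded]
    constructor
    · have hcont : Continuous fun c : Fin N → ℝ => ∑ a, |c a| :=
        continuous_finset_sum _ fun a _ => (continuous_apply a).abs
      exact isClosed_singleton.preimage hcont
    · refine (Metric.isBounded_closedBall (x := (0 : Fin N → ℝ)) (r := 1)).subset ?_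
      intro c hc
      rw [Metric.mem_closedBall, dist_zero_right]
      rw [pi_norm_le_iff_of_nonneg zero_le_one]
      intro a
      calc ‖c a‖ = |c a| := Real.norm_eq_abs _
        _ ≤ ∑ b, |c b| := Finset.single_le_sum (f := fun b => |c b|) (fun b _ => abs_nonneg _) (Finset.mem_univ a)
        _ = 1 := hc
  have hTc : IsCompact (K ×ˢ Set.Icc γ₁ γ₂) := hKc.prod isCompact_Icc
  have hTsubU : K ×ˢ Set.Icc γ₁ γ₂ ⊆ Set.univ ×ˢ U := fun p hp =>
    ⟨Set.mem_univ _, hUIcc hp.2⟩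
  -- open cover and finite subcover
  set W : ℕ → Set ((Fin N → ℝ) × ℝ) := fun m => (Set.univ ×ˢ U) ∩ H m ⁻¹' Set.Ioi 0 with hW
  have hWopen : ∀ m, IsOpen (W m) := fun m =>
    (hHcont m).isOpen_inter_preimage (isOpen_univ.prod hU) isOpen_Ioi
  have hTsub : K ×ˢ Set.Icc γ₁ γ₂ ⊆ ⋃ m, W m := by
    rintro ⟨c, γ⟩ ⟨hcK, hγI⟩
    have hc0 : c ≠ 0 := by
      intro h0
      rw [h0] at hcK
      simp [hK] at hcK
    obtain ⟨n, hn⟩ := hpt c hc0 γ hγI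
    refine Set.mem_iUnion.2 ⟨n, ⟨⟨Set.mem_univ _, hUIcc hγI⟩, ?_⟩⟩
    have hle : |G n (c, γ)| ≤ H n (c, γ) :=
      Finset.single_le_sum (f := fun i => |G i (c, γ)|) (fun i _ => abs_nonneg _)
        (Finset.mem_range.2 (Nat.lt_succ_self n))
    exact lt_of_lt_of_le (abs_pos.2 hn) hle
  obtain ⟨Ifin, hIfin⟩ := hTc.elim_finite_subcover W hWopen hTsub
  set m₀ := Ifin.sup id with hm₀
  have hpos : ∀ p ∈ K ×ˢ Set.Icc γ₁ γ₂, 0 < H m₀ p := by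
    intro p hp
    obtain ⟨m, hm, hpm⟩ := Set.mem_iUnion₂.1 (hIfin hp)
    have h1 : 0 < H m p := hpm.2
    have h2 : H m p ≤ H m₀ p := by
      apply Finset.sum_le_sum_of_subset_of_nonneg
      · exact Finset.range_subset_range.2 (Nat.succ_le_succ (Finset.le_sup (f := id) hm))
      · intro i _ _
        exact abs_nonneg _
    linarith
  obtain ⟨ρ, hρpos, hρ⟩ := hTc.exists_forall_le' ((hHcont m₀).mono hTsubU) hpos
  refine ⟨m₀, ρ / (m₀ + 1), by positivity, ?_⟩
  intro γ hγ ℓ hℓ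
  set S : ℝ := ∑ a, (|ℓ a| : ℝ) with hS
  have hS1 : (1 : ℝ) ≤ S := by
    obtain ⟨a, ha⟩ := Function.ne_iff.1 hℓ
    have h1 : (1 : ℝ) ≤ (|ℓ a| : ℝ) := by
      exact_mod_cast Int.one_le_abs (by simpa using ha)
    calc (1 : ℝ) ≤ (|ℓ a| : ℝ) := h1
      _ ≤ S := Finset.single_le_sum (f := fun b => (|ℓ b| : ℝ))
          (fun b _ => by positivity) (Finset.mem_univ a)
  have hS0 : (0 : ℝ) < S := lt_of_lt_of_le one_pos hS1
  set c : Fin N → ℝ := fun a => (ℓ a : ℝ) / S with hc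
  have hcK : c ∈ K := by
    simp only [hK, Set.mem_setOf_eq, hc]
    calc ∑ a, |(ℓ a : ℝ) / S| = ∑ a, (|ℓ a| : ℝ) / S := by
          refine Finset.sum_congr rfl fun a _ => ?_
          rw [abs_div, abs_of_pos hS0]
      _ = S / S := by rw [← Finset.sum_div]
      _ = 1 := div_self hS0.ne'
  have hHge : ρ ≤ H m₀ (c, γ) := hρ _ ⟨hcK, hγ⟩
  have hex : ∃ n ∈ Finset.range (m₀ + 1), ρ / (m₀ + 1) ≤ |G n (c, γ)| := by
    apply Finset.exists_le_of_sum_le Finset.nonempty_range_add_one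
    have hconst : ∑ _n ∈ Finset.range (m₀ + 1), ρ / (m₀ + 1) = ρ := by
      rw [Finset.sum_const, Finset.card_range, nsmul_eq_mul]
      push_cast
      field_simp
    rw [hconst]
    exact hHge
  obtain ⟨n, hnmem, hnge⟩ := hex
  refine ⟨n, Nat.lt_succ_iff.1 (Finset.mem_range.1 hnmem), ?_⟩
  have hγU : γ ∈ U := hUIcc hγ
  have hrel : iteratedDeriv n (fun γ => ∑ a, Ω γ a * (ℓ a : ℝ)) γ = S * G n (c, γ) := by
    rw [iterDeriv_sum_mul hU hΩ (fun a => (ℓ a : ℝ)) n hγU]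
    simp only [hG, hD, hc]
    rw [Finset.mul_sum]
    refine Finset.sum_congr rfl fun a _ => ?_
    field_simp
  rw [hrel, abs_mul, abs_of_pos hS0]
  have hmax : max 1 S = S := max_eq_right hS1
  calc ρ / (m₀ + 1) * max 1 S = ρ / (m₀ + 1) * S := by rw [hmax]
    _ ≤ |G n (c, γ)| * S := mul_le_mul_of_nonneg_right hnge hS0.le
    _ = S * |G n (c, γ)| := mul_comm _ _
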